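/- Let (f_t) be a W₁,₊-geodesic on an oriented graph G, with flux g_t > 0, and define the velocity field v₊,t(x₀x₁) = g_t(x₀x₁)/f_t(x₀) and the velocity function V₊,t(x₁) = Σ_{x₂∈F(x₁)} v₊,t(x₁x₂). Then ∂/∂t v₊,t(x₀x₁) = −v₊,t(x₀x₁)·[V₊,t(x₁) − V₊,t(x₀)]. -/

import Mathlib

open scoped BigOperators Classical

noncomputable section

theorem velocity_field_evolution
    {V : Type*} [Fintype V] (R : V → V → Prop)
    (f : ℝ → V → ℝ) (g : ℝ → V → V → ℝ) (h : ℝ → V → V → V → ℝ)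
    (hfpos : ∀ t x, 0 < f t x)
    (hgpos : ∀ t x y, R x y → 0 < g t x y)
    (hf : ∀ t x, HasDerivAt (fun s => f s x)
      (-((∑ y, if R x y then g t x y else 0) - ∑ z, if R z x then g t z x else 0)) t)
    (hg : ∀ t x y, R x y → HasDerivAt (fun s => g s x y)
      (-((∑ w, if R y w then h t x y w else 0) - ∑ z, if R z x then h t z x y else 0)) t)
    (hBB : ∀ t x₀ x₁ x₂, R x₀ x₁ → R x₁ x₂ →
      f t x₁ * h t x₀ x₁ x₂ = g t x₀ x₁ * g t x₁ x₂)
    (t : ℝ) (x₀ x₁ : V) (hx : R x₀ x₁) :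
    HasDerivAt (fun s => g s x₀ x₁ / f s x₀)
      (-(g t x₀ x₁ / f t x₀) *
        ((∑ x₂, if R x₁ x₂ then g t x₁ x₂ / f t x₁ else 0) -
          ∑ x₂, if R x₀ x₂ then g t x₀ x₂ / f t x₀ else 0)) t := by
  have hf0 : f t x₀ ≠ 0 := (hfpos t x₀).ne'
  have hf1 : f t x₁ ≠ 0 := (hfpos t x₁).ne'
  have key := (hg t x₀ x₁ hx).div (hf t x₀) hf0
  refine key.congr_deriv ?_
  set A := ∑ y, if R x₀ y then g t x₀ y else 0 with hA
  set B := ∑ z, if R z x₀ then g t z x₀ else 0 with hB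
  set C := ∑ w, if R x₁ w then g t x₁ w else 0 with hC
  set H1 := ∑ w, if R x₁ w then h t x₀ x₁ w else 0 with hH1
  set H2 := ∑ z, if R z x₀ then h t z x₀ x₁ else 0 with hH2
  have e1 : f t x₁ * H1 = g t x₀ x₁ * C := by
    rw [hH1, hC, Finset.mul_sum, Finset.mul_sum]
    refine Finset.sum_congr rfl fun w _ => ?_
    by_cases hw : R x₁ w
    · simp [hw, hBB t x₀ x₁ w hx hw]
    · simp [hw]
  have e2 : f t x₀ * H2 = B * g t x₀ x₁ := by
    rw [hH2, hB, Finset.mul_sum, Finset.sum_mul]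
    refine Finset.sum_congr rfl fun z _ => ?_
    by_cases hz : R z x₀
    · simp [hz, hBB t z x₀ x₁ hz hx]
    · simp [hz]
  have s1 : (∑ x₂, if R x₁ x₂ then g t x₁ x₂ / f t x₁ else 0) = C / f t x₁ := by
    rw [hC, Finset.sum_div]
    refine Finset.sum_congr rfl fun w _ => ?_
    by_cases hw : R x₁ w <;> simp [hw]
  have s0 : (∑ x₂, if R x₀ x₂ then g t x₀ x₂ / f t x₀ else 0) = A / f t x₀ := by
    rw [hA, Finset.sum_div]
    refine Finset.sum_congr rfl fun w _ => ?_
    by_cases hw : R x₀ w <;> simp [hw]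
  rw [s1, s0]
  field_simp
  linear_combination (-f t x₀) * e1 + (f t x₁) * e2
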